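/- arXiv:1407.1969 — 2 statements merged into one kernel-verified Lean document; each statement's English description precedes it below -/
import Mathlib

section
/- Let q > 2, N ≥ 2, |a| = (q-2)/(q-1). If f ∈ C²([0,∞)) satisfies f ≥ 0, f(0) > 0, f'(0) = 0, f not identically zero, and the ODE f''(η) + ((N-1)/η + η/2) f'(η) - (|a|/2) f(η) - |f'(η)|^q = 0 for all η > 0, then f' > 0 on (0,∞), i.e. f is strictly increasing on (0,∞). -/
open Real

theorem profile_increasing (N : ℕ) (hN : 2 ≤ N) (q : ℝ) (hq : 2 < q)
    (f : ℝ → ℝ)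
    (hf : ContDiffOn ℝ 2 f (Set.Ici 0))
    (hfpos : ∀ η ∈ Set.Ici (0 : ℝ), 0 ≤ f η)
    (hf0 : 0 < f 0)
    (hf'0 : deriv f 0 = 0)
    (hfne : ¬ ∀ η ∈ Set.Ici (0 : ℝ), f η = 0)
    (hode : ∀ η : ℝ, 0 < η →
      deriv (deriv f) η + ((N - 1 : ℝ) / η + η / 2) * deriv f η
        - ((q - 2) / (q - 1)) / 2 * f η - |deriv f η| ^ q = 0) :
    ∀ η : ℝ, 0 < η → 0 < deriv f η := by
  obtain ⟨m, rfl⟩ : ∃ m, N = m + 2 := ⟨N - 2, by omega⟩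
  set c : ℝ := ((q - 2) / (q - 1)) / 2 with hc
  have hc0 : 0 < c := by
    have h1 : 0 < q - 2 := by linarith
    have h2 : 0 < q - 1 := by linarith
    positivity
  set G : ℝ → ℝ := derivWithin f (Set.Ici 0) with hG
  have hGcont : ContinuousOn G (Set.Ici 0) :=
    hf.continuousOn_derivWithin (uniqueDiffOn_Ici 0) (by norm_num)
  have hGg : ∀ η : ℝ, 0 < η → G η = deriv f η := fun η hη =>
    derivWithin_of_mem_nhds (Ici_mem_nhds hη)
  set F : ℝ → ℝ := fun η => η ^ (m + 1) * Real.exp (η ^ 2 / 4) * G η with hF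
  have hFcont : ContinuousOn F (Set.Ici 0) := by
    apply ContinuousOn.mul _ hGcont
    fun_prop
  have hF0 : F 0 = 0 := by simp [hF]
  -- second derivative exists on (0,∞)
  have hder2 : ∀ η : ℝ, 0 < η → HasDerivAt (deriv f) (deriv (deriv f) η) η := by
    intro η hη
    have h2 : ContDiffOn ℝ 2 f (Set.Ioi 0) := hf.mono Set.Ioi_subset_Ici_self
    rw [show (2 : WithTop ℕ∞) = 1 + 1 from by norm_num] at h2
    rw [contDiffOn_succ_iff_deriv_of_isOpen isOpen_Ioi] at h2
    have hd : DifferentiableOn ℝ (deriv f) (Set.Ioi 0) :=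
      h2.2.2.differentiableOn one_ne_zero
    exact (hd.differentiableAt (Ioi_mem_nhds hη)).hasDerivAt
  have hder1 : ∀ η : ℝ, 0 < η → HasDerivAt f (deriv f η) η := by
    intro η hη
    have := (hf.contDiffAt (Ici_mem_nhds hη)).differentiableAt (by norm_num)
    exact this.hasDerivAt
  -- derivative of F
  have hFder : ∀ η : ℝ, 0 < η →
      HasDerivAt F (η ^ (m + 1) * Real.exp (η ^ 2 / 4) * (c * f η + |deriv f η| ^ q)) η := by
    intro η hη
    have hne : η ≠ 0 := ne_of_gt hη
    have heq : F =ᶠ[nhds η] fun x => x ^ (m + 1) * Real.exp (x ^ 2 / 4) * deriv f x := by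
      filter_upwards [Ioi_mem_nhds hη] with x hx
      simp only [hF, hGg x hx]
    have hφ : HasDerivAt (fun x : ℝ => x ^ (m + 1) * Real.exp (x ^ 2 / 4))
        (((m : ℝ) + 1) * η ^ m * Real.exp (η ^ 2 / 4)
          + η ^ (m + 1) * (Real.exp (η ^ 2 / 4) * (η / 2))) η := by
      have h1 : HasDerivAt (fun x : ℝ => x ^ (m + 1)) (((m : ℝ) + 1) * η ^ m) η := by
        simpa using hasDerivAt_pow (m + 1) η
      have h2 : HasDerivAt (fun x : ℝ => Real.exp (x ^ 2 / 4))
          (Real.exp (η ^ 2 / 4) * (η / 2)) η := by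
        have hx : HasDerivAt (fun x : ℝ => x ^ 2 / 4) (η / 2) η := by
          have := (hasDerivAt_pow 2 η).div_const 4
          simpa using this.congr_deriv (by ring)
        simpa [mul_comm] using hx.exp
      exact h1.mul h2
    have hprod := hφ.mul (hder2 η hη)
    have key : (((m : ℝ) + 1) * η ^ m * Real.exp (η ^ 2 / 4)
          + η ^ (m + 1) * (Real.exp (η ^ 2 / 4) * (η / 2))) * deriv f η
        + η ^ (m + 1) * Real.exp (η ^ 2 / 4) * deriv (deriv f) η
        = η ^ (m + 1) * Real.exp (η ^ 2 / 4) * (c * f η + |deriv f η| ^ q) := by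
      have ho := hode η hη
      have hdd : deriv (deriv f) η
          = c * f η + |deriv f η| ^ q - (((m : ℝ) + 1) / η + η / 2) * deriv f η := by
        push_cast at ho ⊢
        linear_combination ho
      rw [hdd]
      have hpow : η ^ (m + 1) = η ^ m * η := pow_succ η m
      field_simp
      ring
    rw [← key]
    exact hprod.congr_of_eventuallyEq heq
  have hint : interior (Set.Ici (0 : ℝ)) = Set.Ioi 0 := interior_Ici
  -- F is monotone
  have hFmono : MonotoneOn F (Set.Ici 0) := by
    apply monotoneOn_of_deriv_nonneg (convex_Ici 0) hFcont
    · rw [hint]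
      intro x hx
      exact ((hFder x hx).differentiableAt).differentiableWithinAt
    · rw [hint]
      intro x hx
      have hx' : (0:ℝ) < x := hx
      rw [(hFder x hx).deriv]
      have h1 : 0 ≤ f x := hfpos x (Set.mem_Ici.mpr (le_of_lt hx'))
      have h2 : (0:ℝ) ≤ |deriv f x| ^ q := by positivity
      have h3 : (0:ℝ) ≤ x ^ (m + 1) * Real.exp (x ^ 2 / 4) := by positivity
      have h4 : (0:ℝ) ≤ c * f x := mul_nonneg hc0.le h1
      exact mul_nonneg h3 (by linarith)
  -- hence deriv f ≥ 0 on (0,∞)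
  have hg0 : ∀ η : ℝ, 0 < η → 0 ≤ deriv f η := by
    intro η hη
    have := hFmono (Set.self_mem_Ici) (Set.mem_Ici.mpr (le_of_lt hη)) (le_of_lt hη)
    rw [hF0] at this
    have hφpos : 0 < η ^ (m + 1) * Real.exp (η ^ 2 / 4) := by positivity
    rw [← hGg η hη]
    simp only [hF] at this
    nlinarith [this, hφpos]
  -- f is monotone, hence f ≥ f 0 > 0
  have hfmono : MonotoneOn f (Set.Ici 0) := by
    apply monotoneOn_of_deriv_nonneg (convex_Ici 0) hf.continuousOn
    · rw [hint]
      intro x hx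
      exact ((hder1 x hx).differentiableAt).differentiableWithinAt
    · rw [hint]
      intro x hx
      exact hg0 x hx
  have hfpos' : ∀ η : ℝ, 0 ≤ η → 0 < f η := by
    intro η hη
    have := hfmono Set.self_mem_Ici (Set.mem_Ici.mpr hη) hη
    linarith
  -- F strictly monotone
  have hFstrict : StrictMonoOn F (Set.Ici 0) := by
    apply strictMonoOn_of_deriv_pos (convex_Ici 0) hFcont
    rw [hint]
    intro x hx
    have hx' : (0:ℝ) < x := hx
    rw [(hFder x hx).deriv]
    have h1 : 0 < f x := hfpos' x (le_of_lt hx)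
    have h2 : (0:ℝ) ≤ |deriv f x| ^ q := by positivity
    have h3 : 0 < x ^ (m + 1) * Real.exp (x ^ 2 / 4) := by positivity
    exact mul_pos h3 (by nlinarith [mul_pos hc0 h1])
  intro η hη
  have := hFstrict Set.self_mem_Ici (Set.mem_Ici.mpr (le_of_lt hη)) hη
  rw [hF0] at this
  have hφpos : 0 < η ^ (m + 1) * Real.exp (η ^ 2 / 4) := by positivity
  rw [← hGg η hη]
  simp only [hF] at this
  nlinarith [this, hφpos]
end

section
/- Let q > 1, h > 0, and suppose Φ : B₃ \ B̄₁ → (0,∞) is C² and satisfies |∇Φ|^q - hΦ ≥ 0 and -Δ Φ + Φ + |∇Φ|^q ≥ 0 on B₃ \ B̄₁. Let ψ_h(t) = (1 - e^{-h(q-1)t})^{-1/(q-1)}. Then V(x,t) = e^t Φ(x) ψ_h(t) satisfies V_t - ΔV + |∇V|^q ≥ 0 on (B₃ \ B̄₁) × (0,∞). -/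
open Real

/-- Sum of pure second partial derivatives: the Laplacian. -/
noncomputable def lap {N : ℕ} (f : EuclideanSpace ℝ (Fin N) → ℝ)
    (x : EuclideanSpace ℝ (Fin N)) : ℝ :=
  ∑ i : Fin N, fderiv ℝ (fun y => fderiv ℝ f y (EuclideanSpace.single i 1)) x
    (EuclideanSpace.single i 1)

lemma lap_const_mul {N : ℕ} (c : ℝ) (Φ : EuclideanSpace ℝ (Fin N) → ℝ)
    (x : EuclideanSpace ℝ (Fin N)) (hΦ : ContDiffAt ℝ 2 Φ x) :
    lap (fun y => c * Φ y) x = c * lap Φ x := by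
  unfold lap
  rw [Finset.mul_sum]
  refine Finset.sum_congr rfl fun i _ => ?_
  set e := EuclideanSpace.single i (1:ℝ) with he
  have hev : ∀ᶠ y in nhds x, DifferentiableAt ℝ Φ y :=
    (hΦ.eventually (by norm_num)).mono fun y hy => hy.differentiableAt (by norm_num)
  have heq : (fun y => fderiv ℝ (fun z => c * Φ z) y e) =ᶠ[nhds x]
      (fun y => c * fderiv ℝ Φ y e) := by
    filter_upwards [hev] with y hy
    rw [fderiv_const_mul hy]
    simp
  rw [heq.fderiv_eq]
  have hg : DifferentiableAt ℝ (fun y => fderiv ℝ Φ y e) x := by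
    have h1 : ContDiffAt ℝ 1 (fderiv ℝ Φ) x := hΦ.fderiv_right (by norm_num)
    exact (h1.differentiableAt (by norm_num)).clm_apply (differentiableAt_const _)
  rw [fderiv_const_mul hg]
  simp

theorem supersolution_annulus (N : ℕ) (hN : 1 ≤ N) (q h : ℝ) (hq : 1 < q) (hh : 0 < h)
    (Φ : EuclideanSpace ℝ (Fin N) → ℝ)
    (A : Set (EuclideanSpace ℝ (Fin N)))
    (hA : A = Metric.ball (0 : EuclideanSpace ℝ (Fin N)) 3 \
      Metric.closedBall (0 : EuclideanSpace ℝ (Fin N)) 1)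
    (hΦreg : ∀ x ∈ A, ContDiffAt ℝ 2 Φ x)
    (hΦpos : ∀ x ∈ A, 0 < Φ x)
    (hΦ1 : ∀ x ∈ A, 0 ≤ ‖fderiv ℝ Φ x‖ ^ q - h * Φ x)
    (hΦ2 : ∀ x ∈ A, 0 ≤ -lap Φ x + Φ x + ‖fderiv ℝ Φ x‖ ^ q) :
    let ψ : ℝ → ℝ := fun t => (1 - Real.exp (-h * (q - 1) * t)) ^ (-(1 / (q - 1)))
    let V : EuclideanSpace ℝ (Fin N) → ℝ → ℝ := fun x t => Real.exp t * Φ x * ψ t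
    ∀ x ∈ A, ∀ t : ℝ, 0 < t →
      0 ≤ deriv (fun s => V x s) t - lap (fun y => V y t) x
          + ‖fderiv ℝ (fun y => V y t) x‖ ^ q := by
  intro ψ V x hx t ht
  have hq1 : 0 < q - 1 := by linarith
  have hne : q - 1 ≠ 0 := hq1.ne'
  set u : ℝ := 1 - Real.exp (-h * (q - 1) * t) with hu
  have hupos : 0 < u := by
    have harg : -h * (q - 1) * t < 0 := by nlinarith [mul_pos (mul_pos hh hq1) ht]
    have := Real.exp_lt_one_iff.mpr harg
    rw [hu]; linarith
  have hult : u < 1 := by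
    have := Real.exp_pos (-h * (q - 1) * t)
    rw [hu]; linarith
  have hψt : ψ t = u ^ (-(1 / (q - 1))) := by simp only [ψ, hu]
  have hψ1 : 1 ≤ ψ t := by
    rw [hψt]
    refine Real.one_le_rpow_of_pos_of_le_one_of_nonpos hupos hult.le ?_
    have : 0 < 1 / (q - 1) := by positivity
    linarith
  have hψpos : 0 < ψ t := lt_of_lt_of_le one_pos hψ1
  have hψq : (ψ t) ^ q = u ^ (-(1 / (q - 1)) - 1) := by
    rw [hψt, ← Real.rpow_mul hupos.le]
    congr 1
    field_simp
    ring
  have hmul : u ^ (-(1 / (q - 1)) - 1) * u = ψ t := by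
    rw [hψt, ← Real.rpow_add_one hupos.ne']
    congr 1
    ring
  have hexpu : Real.exp (-h * (q - 1) * t) = 1 - u := by rw [hu]; ring
  have hψsub : (ψ t) ^ q - ψ t
      = u ^ (-(1 / (q - 1)) - 1) * Real.exp (-h * (q - 1) * t) := by
    rw [hψq, hexpu, mul_sub, mul_one, hmul]
  -- derivative of ψ at t
  have hlin : HasDerivAt (fun s : ℝ => -h * (q - 1) * s) (-h * (q - 1)) t := by
    simpa using (hasDerivAt_id t).const_mul (-h * (q - 1))
  have hinner : HasDerivAt (fun s => 1 - Real.exp (-h * (q - 1) * s))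
      (h * (q - 1) * Real.exp (-h * (q - 1) * t)) t := by
    have := (hlin.exp).const_sub 1
    refine this.congr_deriv ?_
    ring
  have hψder : HasDerivAt ψ (-h * ((ψ t) ^ q - ψ t)) t := by
    have hune : (1 : ℝ) - Real.exp (-h * (q - 1) * t) ≠ 0 := by rw [← hu]; exact hupos.ne'
    have hrp := hinner.rpow_const (p := -(1 / (q - 1))) (Or.inl hune)
    have heqd : h * (q - 1) * Real.exp (-h * (q - 1) * t) * (-(1 / (q - 1)))
        * (1 - Real.exp (-h * (q - 1) * t)) ^ (-(1 / (q - 1)) - 1)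
        = -h * ((ψ t) ^ q - ψ t) := by
      rw [← hu, hψsub]
      field_simp
    rw [heqd] at hrp
    exact hrp
  -- time derivative of V x
  have hF : HasDerivAt (fun s => Real.exp s * Φ x) (Real.exp t * Φ x) t :=
    (Real.hasDerivAt_exp t).mul_const (Φ x)
  have hVt : HasDerivAt (fun s => V x s)
      (Real.exp t * Φ x * ψ t + Real.exp t * Φ x * (-h * ((ψ t) ^ q - ψ t))) t := by
    have := hF.mul hψder
    exact this
  have hD : deriv (fun s => V x s) t
      = Real.exp t * Φ x * ψ t + Real.exp t * Φ x * (-h * ((ψ t) ^ q - ψ t)) := hVt.deriv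
  -- spatial derivatives
  have hΦx := hΦreg x hx
  have hVfun : (fun y => V y t) = fun y => (Real.exp t * ψ t) * Φ y := by
    funext y; simp only [V]; ring
  have hlapV : lap (fun y => V y t) x = (Real.exp t * ψ t) * lap Φ x := by
    rw [hVfun, lap_const_mul _ Φ x hΦx]
  have hdiff : DifferentiableAt ℝ Φ x := hΦx.differentiableAt (by norm_num)
  have hcpos : 0 < Real.exp t * ψ t := mul_pos (Real.exp_pos t) hψpos
  have hfd : fderiv ℝ (fun y => V y t) x = (Real.exp t * ψ t) • fderiv ℝ Φ x := by
    rw [hVfun]; exact fderiv_const_mul hdiff _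
  have hnorm : ‖fderiv ℝ (fun y => V y t) x‖ ^ q
      = (Real.exp t) ^ q * (ψ t) ^ q * ‖fderiv ℝ Φ x‖ ^ q := by
    rw [hfd, norm_smul, Real.norm_eq_abs, abs_of_pos hcpos,
      Real.mul_rpow hcpos.le (norm_nonneg _),
      Real.mul_rpow (Real.exp_pos t).le hψpos.le]
  -- the final algebraic inequality
  rw [hD, hlapV, hnorm]
  have h1 := hΦ1 x hx
  have h2 := hΦ2 x hx
  have hE : Real.exp t ≤ (Real.exp t) ^ q := by
    nth_rewrite 1 [← Real.rpow_one (Real.exp t)]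
    exact Real.rpow_le_rpow_of_exponent_le (Real.one_le_exp ht.le) hq.le
  have hPq : ψ t ≤ (ψ t) ^ q := by
    nth_rewrite 1 [← Real.rpow_one (ψ t)]
    exact Real.rpow_le_rpow_of_exponent_le hψ1 hq.le
  have hn : (0:ℝ) ≤ ‖fderiv ℝ Φ x‖ ^ q := Real.rpow_nonneg (norm_nonneg _) q
  have key : Real.exp t * Φ x * ψ t + Real.exp t * Φ x * (-h * ((ψ t) ^ q - ψ t))
        - (Real.exp t * ψ t) * lap Φ x
        + (Real.exp t) ^ q * (ψ t) ^ q * ‖fderiv ℝ Φ x‖ ^ q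
      = Real.exp t * (((ψ t) ^ q - ψ t) * (‖fderiv ℝ Φ x‖ ^ q - h * Φ x)
          + ψ t * (-lap Φ x + Φ x + ‖fderiv ℝ Φ x‖ ^ q))
        + ((Real.exp t) ^ q - Real.exp t) * ((ψ t) ^ q * ‖fderiv ℝ Φ x‖ ^ q) := by
    ring
  rw [key]
  have hA1 : 0 ≤ Real.exp t * (((ψ t) ^ q - ψ t) * (‖fderiv ℝ Φ x‖ ^ q - h * Φ x)
      + ψ t * (-lap Φ x + Φ x + ‖fderiv ℝ Φ x‖ ^ q)) :=
    mul_nonneg (Real.exp_pos t).le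
      (add_nonneg (mul_nonneg (sub_nonneg.mpr hPq) h1) (mul_nonneg hψpos.le h2))
  have hA2 : 0 ≤ ((Real.exp t) ^ q - Real.exp t) * ((ψ t) ^ q * ‖fderiv ℝ Φ x‖ ^ q) :=
    mul_nonneg (sub_nonneg.mpr hE) (mul_nonneg (hψpos.le.trans hPq) hn)
  linarith
end
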